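/- arXiv:1405.6298 — 2 statements merged into one kernel-verified Lean document; each statement's English description precedes it below -/
import Mathlib

section
/- Consider the harmonic oscillator ẋ₁ = −x₂, ẋ₂ = x₁ on ℝ² \ {0} with the cone field K(x) = {δx | k₁(x,δx) ≥ 0 and k₂(x,δx) ≥ 0}, where k₁(x,δx) = −(x₁+x₂)δx₁ + (x₁−x₂)δx₂ and k₂(x,δx) = −(x₂−x₁)δx₁ + (x₁+x₂)δx₂. Then along any solution (x(t), δx(t)) of the prolonged system ẋ = f(x), δẋ = Df(x)δx, the quantities k₁(x(t), δx(t)) and k₂(x(t), δx(t)) are constant in time. -/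
theorem harmonic_oscillator_cone_invariants
    (x1 x2 δx1 δx2 : ℝ → ℝ)
    (hx1 : ∀ t, HasDerivAt x1 (-(x2 t)) t)
    (hx2 : ∀ t, HasDerivAt x2 (x1 t) t)
    (hnz : ∀ t, (x1 t, x2 t) ≠ (0, 0))
    (hδx1 : ∀ t, HasDerivAt δx1 (-(δx2 t)) t)
    (hδx2 : ∀ t, HasDerivAt δx2 (δx1 t) t) :
    ∀ s t : ℝ,
      (-(x1 s + x2 s) * δx1 s + (x1 s - x2 s) * δx2 s =
       -(x1 t + x2 t) * δx1 t + (x1 t - x2 t) * δx2 t) ∧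
      (-(x2 s - x1 s) * δx1 s + (x1 s + x2 s) * δx2 s =
       -(x2 t - x1 t) * δx1 t + (x1 t + x2 t) * δx2 t) := by
  have h1 : ∀ t, HasDerivAt (fun t => -(x1 t + x2 t) * δx1 t + (x1 t - x2 t) * δx2 t)
      (0 : ℝ) t := by
    intro t
    have := ((((hx1 t).add (hx2 t)).neg.mul (hδx1 t)).add
      (((hx1 t).sub (hx2 t)).mul (hδx2 t)))
    exact this.congr_deriv (by simp only [Pi.add_apply, Pi.neg_apply, Pi.sub_apply]; ring)
  have h2 : ∀ t, HasDerivAt (fun t => -(x2 t - x1 t) * δx1 t + (x1 t + x2 t) * δx2 t)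
      (0 : ℝ) t := by
    intro t
    have := ((((hx2 t).sub (hx1 t)).neg.mul (hδx1 t)).add
      (((hx1 t).add (hx2 t)).mul (hδx2 t)))
    exact this.congr_deriv (by simp only [Pi.add_apply, Pi.neg_apply, Pi.sub_apply]; ring)
  intro s t
  constructor
  · exact is_const_of_deriv_eq_zero (fun u => (h1 u).differentiableAt)
      (fun u => (h1 u).deriv) s t
  · exact is_const_of_deriv_eq_zero (fun u => (h2 u).differentiableAt)
      (fun u => (h2 u).deriv) s t
end

section
/- Let A be an n×n matrix with strictly positive entries. Then A maps ℝⁿ₊ \ {0} into the interior of ℝⁿ₊, and the projective diameter of A(ℝⁿ₊\{0}) with respect to the Hilbert metric of ℝⁿ₊ is finite: sup {d(Ax, Ay) | x, y ∈ ℝⁿ₊\{0}} < ∞, where d(u,v) = log( maxᵢ(uᵢ/vᵢ) · maxᵢ(vᵢ/uᵢ) ) for u, v with strictly positive entries. -/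
theorem positive_matrix_finite_projective_diameter {n : ℕ} (hn : 1 ≤ n)
    (A : Matrix (Fin n) (Fin n) ℝ) (hA : ∀ i j, 0 < A i j) :
    (∀ x : Fin n → ℝ, (∀ i, 0 ≤ x i) → x ≠ 0 → ∀ i, 0 < A.mulVec x i) ∧
    ∃ C : ℝ, ∀ x y : Fin n → ℝ,
      (∀ i, 0 ≤ x i) → x ≠ 0 → (∀ i, 0 ≤ y i) → y ≠ 0 →
      Real.log ((⨆ i, A.mulVec x i / A.mulVec y i) * (⨆ i, A.mulVec y i / A.mulVec x i)) ≤ C := by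
  have hne : Nonempty (Fin n) := ⟨⟨0, hn⟩⟩
  have hpos : ∀ x : Fin n → ℝ, (∀ i, 0 ≤ x i) → x ≠ 0 → ∀ i, 0 < A.mulVec x i := by
    intro x hx hx0 i
    obtain ⟨k, hk⟩ : ∃ k, 0 < x k := by
      by_contra h
      push_neg at h
      exact hx0 (funext fun k => le_antisymm (h k) (hx k))
    have : A.mulVec x i = ∑ j, A i j * x j := rfl
    rw [this]
    exact Finset.sum_pos' (fun j _ => mul_nonneg (hA i j).le (hx j))
      ⟨k, Finset.mem_univ k, mul_pos (hA i k) hk⟩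
  refine ⟨hpos, ?_⟩
  have hneP : (Finset.univ : Finset (Fin n × Fin n)).Nonempty := Finset.univ_nonempty
  set m := Finset.univ.inf' hneP (fun p : Fin n × Fin n => A p.1 p.2) with hm
  set M := Finset.univ.sup' hneP (fun p : Fin n × Fin n => A p.1 p.2) with hM
  have hm0 : 0 < m := by
    obtain ⟨p, _, hp⟩ := Finset.exists_mem_eq_inf' hneP (fun p : Fin n × Fin n => A p.1 p.2)
    rw [hm, hp]; exact hA p.1 p.2
  have hmle : ∀ i j, m ≤ A i j := fun i j =>
    Finset.inf'_le (fun p : Fin n × Fin n => A p.1 p.2) (Finset.mem_univ ((i, j) : Fin n × Fin n))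
  have hleM : ∀ i j, A i j ≤ M := fun i j =>
    Finset.le_sup' (fun p : Fin n × Fin n => A p.1 p.2) (Finset.mem_univ ((i, j) : Fin n × Fin n))
  have hM0 : 0 < M := lt_of_lt_of_le hm0 (le_trans (hmle ⟨0, hn⟩ ⟨0, hn⟩) (hleM ⟨0, hn⟩ ⟨0, hn⟩))
  have hR0 : 0 < M / m := div_pos hM0 hm0
  -- key ratio bound within a single image vector
  have hratio : ∀ x : Fin n → ℝ, (∀ i, 0 ≤ x i) → x ≠ 0 →
      ∀ i j, A.mulVec x i ≤ (M / m) * A.mulVec x j := by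
    intro x hx hx0 i j
    have hS : ∀ i, A.mulVec x i ≤ M * ∑ k, x k := by
      intro i
      have : A.mulVec x i = ∑ k, A i k * x k := rfl
      rw [this, Finset.mul_sum]
      exact Finset.sum_le_sum fun k _ => mul_le_mul_of_nonneg_right (hleM i k) (hx k)
    have hS' : ∀ j, m * ∑ k, x k ≤ A.mulVec x j := by
      intro j
      have : A.mulVec x j = ∑ k, A j k * x k := rfl
      rw [this, Finset.mul_sum]
      exact Finset.sum_le_sum fun k _ => mul_le_mul_of_nonneg_right (hmle j k) (hx k)
    calc A.mulVec x i ≤ M * ∑ k, x k := hS i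
      _ = (M / m) * (m * ∑ k, x k) := by field_simp
      _ ≤ (M / m) * A.mulVec x j := mul_le_mul_of_nonneg_left (hS' j) hR0.le
  refine ⟨Real.log ((M / m) * (M / m)), ?_⟩
  intro x y hx hx0 hy hy0
  set u := A.mulVec x with hu
  set v := A.mulVec y with hv
  have hu0 : ∀ i, 0 < u i := hpos x hx hx0
  have hv0 : ∀ i, 0 < v i := hpos y hy hy0
  obtain ⟨i0, hi0⟩ := Finite.exists_max (fun i => u i / v i)
  obtain ⟨j0, hj0⟩ := Finite.exists_max (fun i => v i / u i)
  have ha : (⨆ i, u i / v i) = u i0 / v i0 :=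
    le_antisymm (ciSup_le hi0) (le_ciSup (Set.Finite.bddAbove (Set.finite_range (fun i => u i / v i))) i0)
  have hb : (⨆ i, v i / u i) = v j0 / u j0 :=
    le_antisymm (ciSup_le hj0) (le_ciSup (Set.Finite.bddAbove (Set.finite_range (fun i => v i / u i))) j0)
  rw [ha, hb]
  have hprod : u i0 / v i0 * (v j0 / u j0) ≤ (M / m) * (M / m) := by
    have h1 : u i0 ≤ (M / m) * u j0 := hratio x hx hx0 i0 j0
    have h2 : v j0 ≤ (M / m) * v i0 := hratio y hy hy0 j0 i0
    have e : u i0 / v i0 * (v j0 / u j0) = (u i0 * v j0) / (v i0 * u j0) :=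
      div_mul_div_comm _ _ _ _
    rw [e, div_le_iff₀ (mul_pos (hv0 i0) (hu0 j0))]
    calc u i0 * v j0 ≤ ((M / m) * u j0) * ((M / m) * v i0) :=
          mul_le_mul h1 h2 (hv0 j0).le (mul_nonneg hR0.le (hu0 j0).le)
      _ = (M / m) * (M / m) * (v i0 * u j0) := by ring
  have hpos' : 0 < u i0 / v i0 * (v j0 / u j0) :=
    mul_pos (div_pos (hu0 i0) (hv0 i0)) (div_pos (hv0 j0) (hu0 j0))
  calc Real.log (u i0 / v i0 * (v j0 / u j0)) ≤ Real.log ((M / m) * (M / m)) :=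
        Real.log_le_log hpos' hprod
end
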